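/- Let τ > 0, c > 0, b ≥ 0, and let X : ℝ → ℝ be differentiable on [0, τ] with X(0) ≥ 0. Suppose that for every t ∈ [0, τ], if X(t) ≥ b then X'(t) ≤ −c · X(t). Then X(τ) ≤ max { exp(−cτ) · X(0), b }. -/

import Mathlib

theorem stmt_8 (τ c b : ℝ) (hτ : 0 < τ) (hc : 0 < c) (hb : 0 ≤ b)
    (X X' : ℝ → ℝ)
    (hderiv : ∀ t ∈ Set.Icc (0 : ℝ) τ, HasDerivAt X (X' t) t)
    (hX0 : 0 ≤ X 0)
    (hdecay : ∀ t ∈ Set.Icc (0 : ℝ) τ, b ≤ X t → X' t ≤ -c * X t) :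
    X τ ≤ max (Real.exp (-c * τ) * X 0) b := by
  have hτmem : τ ∈ Set.Icc (0 : ℝ) τ := ⟨hτ.le, le_rfl⟩
  have hXcont : ContinuousOn X (Set.Icc 0 τ) :=
    fun t ht => (hderiv t ht).continuousAt.continuousWithinAt
  by_cases hall : ∀ t ∈ Set.Icc (0 : ℝ) τ, b ≤ X t
  · -- g t = X t * exp(c t) is antitone on [0, τ]
    set g : ℝ → ℝ := fun t => X t * Real.exp (c * t) with hg
    have hgd : ∀ t ∈ Set.Icc (0 : ℝ) τ,
        HasDerivAt g (X' t * Real.exp (c * t) + X t * (c * Real.exp (c * t))) t := by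
      intro t ht
      have he : HasDerivAt (fun t => Real.exp (c * t)) (c * Real.exp (c * t)) t := by
        have := (Real.hasDerivAt_exp (c * t)).comp t ((hasDerivAt_id t).const_mul c)
        simpa [mul_comm, Function.comp_def] using this
      exact (hderiv t ht).mul he
    have hanti : AntitoneOn g (Set.Icc (0 : ℝ) τ) := by
      apply antitoneOn_of_hasDerivWithinAt_nonpos (convex_Icc _ _)
        (fun t ht => ((hgd t ht).continuousAt.continuousWithinAt))
      · intro t ht
        rw [interior_Icc] at ht
        exact ((hgd t (Set.mem_Icc_of_Ioo ht)).hasDerivWithinAt)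
      · intro t ht
        rw [interior_Icc] at ht
        have ht' : t ∈ Set.Icc (0 : ℝ) τ := Set.mem_Icc_of_Ioo ht
        have h1 : X' t ≤ -c * X t := hdecay t ht' (hall t ht')
        have h2 : (0:ℝ) < Real.exp (c * t) := Real.exp_pos _
        nlinarith
    have key := hanti (Set.left_mem_Icc.2 hτ.le) hτmem hτ.le
    simp only [hg, mul_zero, Real.exp_zero, mul_one] at key
    have hxτ : X τ ≤ Real.exp (-c * τ) * X 0 := by
      have h2 : (0:ℝ) < Real.exp (c * τ) := Real.exp_pos _
      have : Real.exp (-c * τ) * Real.exp (c * τ) = 1 := by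
        rw [← Real.exp_add]; ring_nf; exact Real.exp_zero
      nlinarith [Real.exp_pos (-c * τ)]
    exact le_max_of_le_left hxτ
  · push_neg at hall
    obtain ⟨t₀, ht₀, hXt₀⟩ := hall
    -- show X τ ≤ b
    apply le_max_of_le_right
    by_contra hbτ
    push_neg at hbτ
    set S : Set ℝ := Set.Icc t₀ τ ∩ X ⁻¹' Set.Iic b with hS
    have hsub : Set.Icc t₀ τ ⊆ Set.Icc (0:ℝ) τ := Set.Icc_subset_Icc ht₀.1 le_rfl
    have hSclosed : IsClosed S :=
      (hXcont.mono hsub).preimage_isClosed_of_isClosed isClosed_Icc isClosed_Iic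
    have hSne : S.Nonempty := ⟨t₀, ⟨le_rfl, ht₀.2⟩, hXt₀.le⟩
    have hSbdd : BddAbove S := ⟨τ, fun x hx => hx.1.2⟩
    set s := sSup S with hs
    have hsS : s ∈ S := hSclosed.csSup_mem hSne hSbdd
    have hsτ : s ≤ τ := hsS.1.2
    have hsne : s ≠ τ := by
      intro h; rw [h] at hsS; exact absurd hsS.2 (not_le.2 hbτ)
    have hslt : s < τ := lt_of_le_of_ne hsτ hsne
    have hs0 : (0:ℝ) ≤ s := le_trans ht₀.1 hsS.1.1
    -- on (s, τ], X t > b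
    have hgt : ∀ t, s < t → t ≤ τ → b < X t := by
      intro t hst htτ
      by_contra h
      push_neg at h
      have : t ∈ S := ⟨⟨le_trans hsS.1.1 hst.le, htτ⟩, h⟩
      exact absurd (le_csSup hSbdd this) (not_le.2 hst)
    -- X antitone on [s, τ]
    have hanti : AntitoneOn X (Set.Icc s τ) := by
      apply antitoneOn_of_hasDerivWithinAt_nonpos (convex_Icc _ _)
        (hXcont.mono (Set.Icc_subset_Icc hs0 le_rfl))
      · intro t ht
        rw [interior_Icc] at ht
        exact (hderiv t ⟨le_trans hs0 ht.1.le, ht.2.le⟩).hasDerivWithinAt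
      · intro t ht
        rw [interior_Icc] at ht
        have ht' : t ∈ Set.Icc (0:ℝ) τ := ⟨le_trans hs0 ht.1.le, ht.2.le⟩
        have hbt : b ≤ X t := (hgt t ht.1 ht.2.le).le
        have := hdecay t ht' hbt
        nlinarith
    have := hanti (Set.left_mem_Icc.2 hslt.le) (Set.right_mem_Icc.2 hslt.le) hslt.le
    exact absurd (le_trans this hsS.2) (not_le.2 hbτ)
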